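/- Let W be a finite subgroup of GLₙ(ℂ) and let f₁, …, fₙ ∈ ℂ[x₁,…,xₙ] be algebraically independent homogeneous polynomials, of degrees d₁, …, dₙ, that generate the algebra ℂ[x₁,…,xₙ]^W of W-invariant polynomials. Then the map v ↦ (f₁(v),…,fₙ(v)) sends ℂⁿ∖{0} into ℂⁿ∖{0} and induces a bijection from ℙ(ℂⁿ)/W onto the weighted projective space ℙ(d₁,…,dₙ). Concretely: (i) for every v ∈ ℂⁿ∖{0}, not all fᵢ(v) vanish; (ii) for u, v ∈ ℂⁿ∖{0}, there exists t ∈ ℂ* with fᵢ(u) = t^{dᵢ}·fᵢ(v) for all i, if and only if u = s·(g·v) for some g ∈ W and s ∈ ℂ*; (iii) for every x ∈ ℂⁿ∖{0} there exist v ∈ ℂⁿ∖{0} and t ∈ ℂ* with xᵢ = t^{dᵢ}·fᵢ(v) for all i. -/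

import Mathlib

noncomputable section
open MvPolynomial Matrix

namespace Stmt10Aux
variable {n : ℕ}

def Lmat (g : Matrix (Fin n) (Fin n) ℂ) : Fin n → MvPolynomial (Fin n) ℂ :=
  fun j => ∑ k, C (g j k) * X k

lemma eval_Lmat (g : Matrix (Fin n) (Fin n) ℂ) (v : Fin n → ℂ) (j : Fin n) :
    eval v (Lmat g j) = g.mulVec v j := by
  simp [Lmat, Matrix.mulVec, dotProduct]

lemma eval_bind_Lmat (g : Matrix (Fin n) (Fin n) ℂ) (v : Fin n → ℂ)
    (p : MvPolynomial (Fin n) ℂ) :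
    eval v (bind₁ (Lmat g) p) = eval (g.mulVec v) p := by
  have h := eval₂Hom_bind₁ (RingHom.id ℂ) v (Lmat g) p
  simp only [MvPolynomial.eval] at *
  rw [h]
  exact congrArg (fun w => eval₂Hom (RingHom.id ℂ) w p) (funext (eval_Lmat g v))

lemma Lmat_one (j : Fin n) : Lmat (1 : Matrix (Fin n) (Fin n) ℂ) j = X j := by
  simp [Lmat, Matrix.one_apply, apply_ite C, ite_mul, Finset.sum_ite_eq]

lemma homog_eval_smul {p : MvPolynomial (Fin n) ℂ} {m : ℕ} (hp : p.IsHomogeneous m)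
    (s : ℂ) (v : Fin n → ℂ) : eval (s • v) p = s ^ m * eval v p := by
  rw [eval_eq', eval_eq', Finset.mul_sum]
  apply Finset.sum_congr rfl
  intro dd hdd
  have h1 := hp (mem_support_iff.mp hdd)
  have hdeg : ∑ i, dd i = m := by
    simpa [Finsupp.weight_apply, Finsupp.sum_fintype] using h1
  calc p.coeff dd * ∏ i, (s • v) i ^ dd i
      = p.coeff dd * ∏ i, (s ^ dd i * v i ^ dd i) := by
        simp [Pi.smul_apply, smul_eq_mul, mul_pow]
    _ = s ^ m * (p.coeff dd * ∏ i, v i ^ dd i) := by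
        rw [Finset.prod_mul_distrib, ← hdeg, ← Finset.prod_pow_eq_pow_sum]
        ring

lemma coeff_linform (w : Fin n → ℂ) (j : Fin n) :
    coeff (Finsupp.single j 1) (∑ k, C (w k) * X k) = w j := by
  rw [MvPolynomial.coeff_sum]
  rw [Finset.sum_eq_single j]
  · simp
  · intro k _ hk
    simp [coeff_C_mul, coeff_X', Finsupp.single_left_inj one_ne_zero, hk]
  · simp

lemma exists_linear (T : Finset (Fin n → ℂ)) (hT : ∀ w ∈ T, w ≠ 0) :
    ∃ c : Fin n → ℂ, ∀ w ∈ T, (∑ j, c j * w j) ≠ 0 := by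
  by_contra hcon
  push_neg at hcon
  have hQ : (∏ w ∈ T, ∑ k, C (w k) * X k : MvPolynomial (Fin n) ℂ) = 0 := by
    apply MvPolynomial.funext
    intro c
    obtain ⟨w, hwT, hw⟩ := hcon c
    rw [map_prod, map_zero]
    refine Finset.prod_eq_zero hwT ?_
    rw [← hw]
    simp [mul_comm]
  obtain ⟨w, hwT, hw⟩ := Finset.prod_eq_zero_iff.mp hQ
  apply hT w hwT
  funext j
  have := coeff_linform w j
  rw [hw] at this
  simpa using this.symm


variable (W : Subgroup (GL (Fin n) ℂ))

/-- matrix of an element of W -/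
def M (g : W) : Matrix (Fin n) (Fin n) ℂ :=
  ((g : GL (Fin n) ℂ) : Matrix (Fin n) (Fin n) ℂ)

lemma M_mul (g h : W) : M W (g * h) = M W g * M W h := by
  simp [M]

lemma M_one : M W (1 : W) = 1 := by simp [M]

lemma sep [Fintype W] (u w : Fin n → ℂ)
    (h : ∀ g ∈ W, u ≠ (g : Matrix (Fin n) (Fin n) ℂ).mulVec w) :
    ∃ P : MvPolynomial (Fin n) ℂ,
      (∀ g ∈ W, ∀ v : Fin n → ℂ,
        eval ((g : Matrix (Fin n) (Fin n) ℂ).mulVec v) P = eval v P) ∧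
      eval u P ≠ 0 ∧ eval w P = 0 := by
  classical
  have hT : ∀ h' g : W, (M W g).mulVec u - (M W h').mulVec w ≠ 0 := by
    intro h' g hz
    have heq : (M W g).mulVec u = (M W h').mulVec w := by
      have := sub_eq_zero.mp hz; exact this
    refine h ((g⁻¹ * h' : W) : GL (Fin n) ℂ) (SetLike.coe_mem _) ?_
    have : (M W (g⁻¹ * h')).mulVec w = u := by
      rw [M_mul, ← Matrix.mulVec_mulVec, ← heq, Matrix.mulVec_mulVec, ← M_mul,
        inv_mul_cancel, M_one, Matrix.one_mulVec]
    exact this.symm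
  have hch : ∀ h' : W, ∃ c : Fin n → ℂ,
      ∀ g : W, (∑ j, c j * ((M W g).mulVec u - (M W h').mulVec w) j) ≠ 0 := by
    intro h'
    obtain ⟨c, hc⟩ := exists_linear
      (Finset.image (fun g : W => (M W g).mulVec u - (M W h').mulVec w) Finset.univ)
      (by
        intro w' hw'
        obtain ⟨g, -, rfl⟩ := Finset.mem_image.mp hw'
        exact hT h' g)
    exact ⟨c, fun g => hc _ (Finset.mem_image_of_mem _ (Finset.mem_univ g))⟩
  choose c hc using hch
  set ℓ : W → MvPolynomial (Fin n) ℂ :=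
    fun h' => ∑ j, C (c h' j) * (X j - C ((M W h').mulVec w j)) with hℓ
  set p₀ : MvPolynomial (Fin n) ℂ := ∏ h' : W, ℓ h' with hp₀
  set P : MvPolynomial (Fin n) ℂ := ∏ g : W, bind₁ (Lmat (M W g)) p₀ with hP
  have evalℓ : ∀ (h' : W) (y : Fin n → ℂ),
      eval y (ℓ h') = ∑ j, c h' j * (y j - (M W h').mulVec w j) := by
    intro h' y; simp [hℓ]
  have evalP : ∀ y : Fin n → ℂ, eval y P = ∏ g : W, eval ((M W g).mulVec y) p₀ := by
    intro y
    rw [hP, map_prod]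
    exact Finset.prod_congr rfl fun g _ => eval_bind_Lmat _ _ _
  refine ⟨P, ?_, ?_, ?_⟩
  · intro g₀ hg₀ v
    set g₀' : W := ⟨g₀, hg₀⟩ with hg₀'
    rw [evalP, evalP,
      ← Equiv.prod_comp (Equiv.mulRight g₀') (fun g : W => eval ((M W g).mulVec v) p₀)]
    refine Finset.prod_congr rfl fun g _ => ?_
    have : (M W g).mulVec ((g₀ : Matrix (Fin n) (Fin n) ℂ).mulVec v)
        = (M W (g * g₀')).mulVec v := by
      rw [Matrix.mulVec_mulVec, M_mul]
      rfl
    rw [this]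
    rfl
  · rw [evalP, Finset.prod_ne_zero_iff]
    intro g _
    have : eval ((M W g).mulVec u) p₀
        = ∏ h' : W, eval ((M W g).mulVec u) (ℓ h') := by rw [hp₀, map_prod]
    rw [this, Finset.prod_ne_zero_iff]
    intro h' _
    rw [evalℓ]
    have := hc h' g
    simpa using this
  · rw [evalP]
    refine Finset.prod_eq_zero (Finset.mem_univ (1 : W)) ?_
    rw [M_one, Matrix.one_mulVec, hp₀, map_prod]
    refine Finset.prod_eq_zero (Finset.mem_univ (1 : W)) ?_
    rw [evalℓ, M_one, Matrix.one_mulVec]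
    simp


lemma eval_agree {f : Fin n → MvPolynomial (Fin n) ℂ} {p : MvPolynomial (Fin n) ℂ}
    (hp : p ∈ Algebra.adjoin ℂ (Set.range f)) (u₁ u₂ : Fin n → ℂ)
    (hf : ∀ i, eval u₁ (f i) = eval u₂ (f i)) : eval u₁ p = eval u₂ p := by
  induction hp using Algebra.adjoin_induction with
  | mem q hq => obtain ⟨i, rfl⟩ := hq; exact hf i
  | algebraMap r => simp [MvPolynomial.algebraMap_eq]
  | add a b ha hb iha ihb => simp [iha, ihb]
  | mul a b ha hb iha ihb => simp [iha, ihb]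

lemma X_ne_C (i : Fin n) (a : ℂ) : (X i : MvPolynomial (Fin n) ℂ) ≠ C a := by
  intro hXC
  have h2 := congrArg (coeff (Finsupp.single i 1)) hXC
  rw [coeff_X, if_pos rfl, coeff_C, if_neg (by
    simp [eq_comm, Finsupp.single_eq_zero])] at h2
  exact one_ne_zero h2

lemma eq_C_of_homog_zero {p : MvPolynomial (Fin n) ℂ} (hp : p.IsHomogeneous 0) :
    p = C (coeff 0 p) := by
  have h := (totalDegree_zero_iff_isHomogeneous _).mpr hp
  rw [totalDegree_eq_zero_iff] at h
  apply MvPolynomial.ext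
  intro m
  rcases eq_or_ne m 0 with rfl | hm
  · simp
  · rw [coeff_C, if_neg (by simp [eq_comm, hm])]
    by_contra hc
    exact hm (Finsupp.ext fun x => h m (mem_support_iff.mpr hc) x)


lemma isIntegral_X (W : Subgroup (GL (Fin n) ℂ)) [Fintype W]
    {f : Fin n → MvPolynomial (Fin n) ℂ}
    (hgen : ∀ p : MvPolynomial (Fin n) ℂ,
      (∀ g ∈ W, ∀ v : Fin n → ℂ,
        eval ((g : Matrix (Fin n) (Fin n) ℂ).mulVec v) p = eval v p) →
      p ∈ Algebra.adjoin ℂ (Set.range f)) (j : Fin n) :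
    IsIntegral (Algebra.adjoin ℂ (Set.range f)) (X j : MvPolynomial (Fin n) ℂ) := by
  classical
  set R := Algebra.adjoin ℂ (Set.range f) with hR
  set Φ : Polynomial (MvPolynomial (Fin n) ℂ) :=
    ∏ g : W, (Polynomial.X - Polynomial.C (bind₁ (Lmat (M W g)) (X j))) with hΦ
  have hmonic : Φ.Monic :=
    Polynomial.monic_prod_of_monic _ _ fun g _ => Polynomial.monic_X_sub_C _
  have hmap : ∀ y : Fin n → ℂ, Φ.map (eval y) =
      ∏ g : W, (Polynomial.X - Polynomial.C (((M W g).mulVec y) j)) := by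
    intro y
    rw [hΦ, Polynomial.map_prod]
    refine Finset.prod_congr rfl fun g _ => ?_
    rw [Polynomial.map_sub, Polynomial.map_X, Polynomial.map_C, eval_bind_Lmat]
    simp
  have hinvΦ : ∀ g₀ ∈ W, ∀ v : Fin n → ℂ,
      Φ.map (eval ((g₀ : Matrix (Fin n) (Fin n) ℂ).mulVec v)) = Φ.map (eval v) := by
    intro g₀ hg₀ v
    rw [hmap, hmap]
    set g₀' : W := ⟨g₀, hg₀⟩ with hg₀'
    rw [← Equiv.prod_comp (Equiv.mulRight g₀')
      (fun g : W => Polynomial.X - Polynomial.C (((M W g).mulVec v) j))]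
    refine Finset.prod_congr rfl fun g _ => ?_
    have h4 : (M W g).mulVec ((g₀ : Matrix (Fin n) (Fin n) ℂ).mulVec v)
        = (M W (g * g₀')).mulVec v := by rw [Matrix.mulVec_mulVec, M_mul]; rfl
    rw [h4]
    rfl
  have hcoeff : (↑Φ.coeffs : Set (MvPolynomial (Fin n) ℂ)) ⊆ ↑R.toSubring := by
    intro a ha
    obtain ⟨k, -, rfl⟩ := Polynomial.mem_coeffs_iff.mp ha
    refine hgen _ ?_
    intro g hg v
    have h5 := congrArg (fun q => Polynomial.coeff q k) (hinvΦ g hg v)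
    simpa [Polynomial.coeff_map] using h5
  have hroot : Polynomial.eval (X j : MvPolynomial (Fin n) ℂ) Φ = 0 := by
    rw [hΦ, Polynomial.eval_prod]
    refine Finset.prod_eq_zero (Finset.mem_univ (1 : W)) ?_
    rw [M_one]
    simp [bind₁_X_right, Lmat_one]
  refine ⟨Φ.toSubring R.toSubring hcoeff, (Φ.monic_toSubring _ _).mpr hmonic, ?_⟩
  rw [Polynomial.eval₂_eq_eval_map]
  have h6 : (Φ.toSubring R.toSubring hcoeff).map (algebraMap R (MvPolynomial (Fin n) ℂ))
      = Φ := Φ.map_toSubring R.toSubring hcoeff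
  rw [h6, hroot]

end Stmt10Aux

theorem stmt_10 {n : ℕ} (W : Subgroup (GL (Fin n) ℂ)) (hW : Finite W)
    (f : Fin n → MvPolynomial (Fin n) ℂ) (d : Fin n → ℕ)
    (hhom : ∀ i, (f i).IsHomogeneous (d i))
    (halg : AlgebraicIndependent ℂ f)
    (hinv : ∀ i, ∀ g ∈ W, ∀ v : Fin n → ℂ,
      MvPolynomial.eval ((g : Matrix (Fin n) (Fin n) ℂ).mulVec v) (f i)
        = MvPolynomial.eval v (f i))
    (hgen : ∀ p : MvPolynomial (Fin n) ℂ,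
      (∀ g ∈ W, ∀ v : Fin n → ℂ,
        MvPolynomial.eval ((g : Matrix (Fin n) (Fin n) ℂ).mulVec v) p
          = MvPolynomial.eval v p) →
      p ∈ Algebra.adjoin ℂ (Set.range f)) :
    -- (i) the map v ↦ (f₁(v),…,fₙ(v)) sends ℂⁿ∖{0} into ℂⁿ∖{0}
    (∀ v : Fin n → ℂ, v ≠ 0 → ∃ i, MvPolynomial.eval v (f i) ≠ 0) ∧
    -- (ii) injectivity on the level of the quotients
    (∀ u v : Fin n → ℂ, u ≠ 0 → v ≠ 0 →
      ((∃ t : ℂ, t ≠ 0 ∧ ∀ i, MvPolynomial.eval u (f i)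
          = t ^ d i * MvPolynomial.eval v (f i))
        ↔ (∃ g ∈ W, ∃ s : ℂ, s ≠ 0 ∧
            u = s • (g : Matrix (Fin n) (Fin n) ℂ).mulVec v))) ∧
    -- (iii) surjectivity onto the weighted projective space
    (∀ x : Fin n → ℂ, x ≠ 0 → ∃ v : Fin n → ℂ, v ≠ 0 ∧ ∃ t : ℂ, t ≠ 0 ∧
      ∀ i, x i = t ^ d i * MvPolynomial.eval v (f i)) := by
  classical
  haveI : Fintype W := Fintype.ofFinite W
  have hd : ∀ i, d i ≠ 0 := by
    intro i h0
    have hC : f i = C (coeff 0 (f i)) := Stmt10Aux.eq_C_of_homog_zero (h0 ▸ hhom i)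
    refine Stmt10Aux.X_ne_C i (coeff 0 (f i)) (halg ?_)
    rw [aeval_X, aeval_C, MvPolynomial.algebraMap_eq]
    exact hC
  have hf0 : ∀ i, MvPolynomial.eval (0 : Fin n → ℂ) (f i) = 0 := by
    intro i
    have h2 := Stmt10Aux.homog_eval_smul (hhom i) 0 0
    simpa [zero_pow (hd i)] using h2
  refine ⟨?_, ?_, ?_⟩
  · intro v hv
    by_contra hcon
    push_neg at hcon
    obtain ⟨P, hPinv, hPu, hPw⟩ := Stmt10Aux.sep W v 0 (by
      intro g hg hvg
      exact hv (by rw [hvg, Matrix.mulVec_zero]))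
    have h3 := Stmt10Aux.eval_agree (hgen P hPinv) v 0 (fun i => by rw [hcon i, hf0 i])
    exact hPu (h3.trans hPw)
  · intro u v hu hv
    constructor
    · rintro ⟨t, ht, hteq⟩
      have key : ∀ i, MvPolynomial.eval u (f i) = MvPolynomial.eval (t • v) (f i) := by
        intro i; rw [Stmt10Aux.homog_eval_smul (hhom i), hteq i]
      have hex : ∃ g ∈ W, u = (g : Matrix (Fin n) (Fin n) ℂ).mulVec (t • v) := by
        by_contra hcon
        push_neg at hcon
        obtain ⟨P, hPinv, hPu, hPw⟩ := Stmt10Aux.sep W u (t • v) hcon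
        exact hPu ((Stmt10Aux.eval_agree (hgen P hPinv) u (t • v) key).trans hPw)
      obtain ⟨g, hg, hueq⟩ := hex
      exact ⟨g, hg, t, ht, by rw [hueq, Matrix.mulVec_smul]⟩
    · rintro ⟨g, hg, s, hs, rfl⟩
      refine ⟨s, hs, fun i => ?_⟩
      rw [Stmt10Aux.homog_eval_smul (hhom i), hinv i g hg v]
  · intro x hx
    set R := Algebra.adjoin ℂ (Set.range f) with hRdef
    have hXint : ∀ j, IsIntegral R (X j : MvPolynomial (Fin n) ℂ) :=
      Stmt10Aux.isIntegral_X W hgen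
    have htop : Algebra.adjoin (↥R) (Set.range (X : Fin n → MvPolynomial (Fin n) ℂ)) = ⊤ := by
      rw [eq_top_iff]
      rintro p -
      induction p using MvPolynomial.induction_on with
      | C a =>
        have h8 : (C a : MvPolynomial (Fin n) ℂ)
            = algebraMap ↥R _ ⟨C a, by
                rw [← MvPolynomial.algebraMap_eq]; exact R.algebraMap_mem a⟩ := rfl
        rw [h8]
        exact Subalgebra.algebraMap_mem _ _
      | add p q hp hq => exact add_mem hp hq
      | mul_X p j hp => exact mul_mem hp (Algebra.subset_adjoin ⟨j, rfl⟩)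
    haveI hintS : Algebra.IsIntegral ↥R (MvPolynomial (Fin n) ℂ) := by
      rw [← integralClosure_eq_top_iff, eq_top_iff, ← htop]
      exact Algebra.adjoin_le (by rintro _ ⟨j, rfl⟩; exact hXint j)
    let e := halg.aevalEquiv
    let φ : ↥R →ₐ[ℂ] ℂ := (MvPolynomial.aeval x).comp e.symm.toAlgHom
    have hfmem : ∀ i, f i ∈ R := fun i => Algebra.subset_adjoin ⟨i, rfl⟩
    have hφf : ∀ i, φ ⟨f i, hfmem i⟩ = x i := by
      intro i
      have h7 : e.symm ⟨f i, hfmem i⟩ = X i := by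
        apply e.injective
        rw [AlgEquiv.apply_symm_apply]
        apply Subtype.ext
        have h9 := halg.algebraMap_aevalEquiv (X i)
        exact (h9.trans (aeval_X f i)).symm
      show (MvPolynomial.aeval x) (e.symm ⟨f i, hfmem i⟩) = x i
      rw [h7, aeval_X]
    have hφsurj : Function.Surjective φ.toRingHom := by
      intro c
      exact ⟨algebraMap ℂ ↥R c, φ.commutes c⟩
    haveI hker : (RingHom.ker φ.toRingHom).IsMaximal :=
      RingHom.ker_isMaximal_of_surjective _ hφsurj
    obtain ⟨Q, hQmax, hQ⟩ := Ideal.exists_ideal_over_maximal_of_isIntegral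
      (RingHom.ker φ.toRingHom) (by
        intro y hy
        have h10 : (algebraMap ↥R (MvPolynomial (Fin n) ℂ)) y = 0 := hy
        have hy0 : y = 0 := Subtype.ext (by simpa using h10)
        simp [hy0])
    obtain ⟨v, hv⟩ := (MvPolynomial.isMaximal_iff_eq_vanishingIdeal_singleton (I := Q)).mp hQmax
    have hfv : ∀ i, MvPolynomial.eval v (f i) = x i := by
      intro i
      have hmem : (⟨f i, hfmem i⟩ - algebraMap ℂ ↥R (x i) : ↥R)
          ∈ RingHom.ker φ.toRingHom := by
        rw [RingHom.mem_ker]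
        show φ (⟨f i, hfmem i⟩ - algebraMap ℂ ↥R (x i)) = 0
        rw [map_sub, hφf i, AlgHom.commutes]
        simp
      rw [← hQ, Ideal.mem_comap] at hmem
      have h11 : (f i - C (x i) : MvPolynomial (Fin n) ℂ) ∈ Q := by
        have h12 : (algebraMap ↥R (MvPolynomial (Fin n) ℂ))
            (⟨f i, hfmem i⟩ - algebraMap ℂ ↥R (x i))
            = f i - C (x i) := by
          show ((⟨f i, hfmem i⟩ - algebraMap ℂ ↥R (x i) : ↥R) : MvPolynomial (Fin n) ℂ)
            = f i - C (x i)
          rw [AddSubgroupClass.coe_sub]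
          congr 1
        rwa [h12] at hmem
      rw [hv, MvPolynomial.mem_vanishingIdeal_singleton_iff] at h11
      have h13 : MvPolynomial.eval v (f i) - x i = 0 := by simpa using h11
      rw [sub_eq_zero] at h13
      exact h13
    have hvne : v ≠ 0 := by
      intro h0
      obtain ⟨i, hi⟩ := Function.ne_iff.mp hx
      apply hi
      have h14 := hfv i
      rw [h0, hf0 i] at h14
      simpa using h14.symm
    exact ⟨v, hvne, 1, one_ne_zero, fun i => by rw [one_pow, one_mul, hfv i]⟩
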